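/- Let M be a cohomological Mackey functor for a finite group G whose values are ℤ[1/m]-modules where m is the product of the primes dividing |G| other than p, and let P be a Sylow p-subgroup of G. Let R ⊆ M(G/P) be the subgroup of elements x satisfying res^P_H(x) = c_g(res^P_{g⁻¹Hg}(x)) for all H ≤ P and g ∈ G with g⁻¹Hg ≤ P. Then the composite R ↪ M(G/P) → M(G/G) given by the transfer tr^G_P is an isomorphism. -/

import Mathlib

open scoped Pointwise

lemma conj_smul_inf_aux {G : Type*} [Group G] (g : MulAut G) (K L : Subgroup G) :
    g • (g⁻¹ • K ⊓ L) = K ⊓ g • L := by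
  ext x
  simp only [Subgroup.mem_pointwise_smul_iff_inv_smul_mem, Subgroup.mem_inf, inv_inv]
  constructor
  · rintro ⟨h1, h2⟩
    refine ⟨?_, h2⟩
    simpa using h1
  · rintro ⟨h1, h2⟩
    exact ⟨by simpa using h1, h2⟩

/-- A Mackey functor for a finite group `G`, on abelian-group values `obj`. -/
structure MackeyFunctor (G : Type*) [Group G] (obj : Subgroup G → Type*)
    [∀ H, AddCommGroup (obj H)] where
  res : ∀ (K H : Subgroup G), K ≤ H → obj H →+ obj K
  tr : ∀ (K H : Subgroup G), K ≤ H → obj K →+ obj H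
  conj : ∀ (g : G) (H K : Subgroup G), MulAut.conj g • H = K → obj H →+ obj K
  res_refl : ∀ H, res H H le_rfl = AddMonoidHom.id _
  tr_refl : ∀ H, tr H H le_rfl = AddMonoidHom.id _
  res_trans : ∀ (K H L : Subgroup G) (h1 : K ≤ H) (h2 : H ≤ L),
    (res K H h1).comp (res H L h2) = res K L (h1.trans h2)
  tr_trans : ∀ (K H L : Subgroup G) (h1 : K ≤ H) (h2 : H ≤ L),
    (tr H L h2).comp (tr K H h1) = tr K L (h1.trans h2)
  conj_refl : ∀ (H : Subgroup G) (h : MulAut.conj (1 : G) • H = H),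
    conj 1 H H h = AddMonoidHom.id _
  conj_trans : ∀ (g₁ g₂ : G) (H K L : Subgroup G) (h1 : MulAut.conj g₁ • H = K)
    (h2 : MulAut.conj g₂ • K = L) (h3 : MulAut.conj (g₂ * g₁) • H = L),
    (conj g₂ K L h2).comp (conj g₁ H K h1) = conj (g₂ * g₁) H L h3
  conj_res : ∀ (g : G) (K H K' H' : Subgroup G) (hKH : K ≤ H)
    (hK : MulAut.conj g • K = K') (hH : MulAut.conj g • H = H') (hK'H' : K' ≤ H'),
    (res K' H' hK'H').comp (conj g H H' hH) = (conj g K K' hK).comp (res K H hKH)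
  conj_tr : ∀ (g : G) (K H K' H' : Subgroup G) (hKH : K ≤ H)
    (hK : MulAut.conj g • K = K') (hH : MulAut.conj g • H = H') (hK'H' : K' ≤ H'),
    (tr K' H' hK'H').comp (conj g K K' hK) = (conj g H H' hH).comp (tr K H hKH)
  mackey : ∀ (H K L : Subgroup G) (hK : K ≤ H) (hL : L ≤ H) (T : Finset G),
    (∀ t ∈ T, t ∈ H) →
    (∀ h ∈ H, ∃! t, t ∈ T ∧ ∃ k ∈ K, ∃ l ∈ L, h = k * t * l) →
    ∀ x : obj L,
      res K H hK (tr L H hL x) =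
        ∑ t ∈ T.attach,
          tr (K ⊓ MulAut.conj (t : G) • L) K inf_le_left
            (conj (t : G) ((MulAut.conj (t : G))⁻¹ • K ⊓ L) (K ⊓ MulAut.conj (t : G) • L)
              (conj_smul_inf_aux _ K L)
              (res ((MulAut.conj (t : G))⁻¹ • K ⊓ L) L inf_le_right x))

/-- A Mackey functor is *cohomological* if `tr ∘ res` is multiplication by the index. -/
def MackeyFunctor.IsCohomological {G : Type*} [Group G] {obj : Subgroup G → Type*}
    [∀ H, AddCommGroup (obj H)] (M : MackeyFunctor G obj) : Prop :=
  ∀ (K H : Subgroup G) (h : K ≤ H) (x : obj H),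
    M.tr K H h (M.res K H h x) = (K.relIndex H) • x


lemma aux_nsmul_bij {A : Type*} [AddCommGroup A] :
    ∀ n : ℕ, n ≠ 0 → (∀ q : ℕ, q.Prime → q ∣ n → Function.Bijective fun x : A => q • x) →
    Function.Bijective fun x : A => n • x := by
  intro n
  induction n using Nat.strong_induction_on with
  | _ n ih =>
    intro hn hq
    rcases eq_or_ne n 1 with rfl | h1
    · simp only [one_smul]; exact Function.bijective_id
    · obtain ⟨q, hqp, m, rfl⟩ : ∃ q, q.Prime ∧ ∃ m, n = q * m := by
        obtain ⟨q, hqp, hdvd⟩ := Nat.exists_prime_and_dvd h1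
        obtain ⟨m, rfl⟩ := hdvd
        exact ⟨q, hqp, m, rfl⟩
      have hm : m ≠ 0 := by rintro rfl; simp at hn
      have hmlt : m < q * m := by
        have h2 := hqp.two_le
        have := Nat.pos_of_ne_zero hm
        nlinarith
      have hbm := ih m hmlt hm (fun r hr hd => hq r hr (hd.mul_left q))
      have hbq := hq q hqp ⟨m, rfl⟩
      have he : (fun x : A => (q * m) • x) = (fun x : A => q • x) ∘ (fun x : A => m • x) := by
        funext x; simp [mul_smul]
      rw [he]
      exact hbq.comp hbm

lemma aux_smul_top {G : Type*} [Group G] (a : MulAut G) : a • (⊤ : Subgroup G) = ⊤ := by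
  ext x
  simp [Subgroup.mem_pointwise_smul_iff_inv_smul_mem]

open MulAction in
lemma aux_count {G : Type*} [Group G] [Finite G] (P : Subgroup G) :
    ∃ T : Finset G, (∀ h : G, ∃! t, t ∈ T ∧ ∃ k ∈ P, ∃ l ∈ P, h = k * t * l) ∧
      (∑ t ∈ T, (P ⊓ MulAut.conj t • P).relIndex P) = P.index := by
  classical
  cases nonempty_fintype G
  letI : Fintype (G ⧸ P) := Fintype.ofFinite _
  letI : Fintype (orbitRel.Quotient P (G ⧸ P)) := Fintype.ofFinite _
  set Ω := orbitRel.Quotient P (G ⧸ P) with hΩ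
  let rep : Ω → G := fun ω => Quotient.out (Quotient.out ω)
  have hrep : ∀ ω : Ω, (QuotientGroup.mk (rep ω) : G ⧸ P) = Quotient.out ω :=
    fun ω => Quotient.out_eq _
  have horb : ∀ h t : G,
      ((QuotientGroup.mk h : G ⧸ P) ∈ orbit P (QuotientGroup.mk t : G ⧸ P)) ↔
        ∃ k ∈ P, ∃ l ∈ P, h = k * t * l := by
    intro h t
    constructor
    · rintro ⟨⟨k, hk⟩, hkt⟩
      have : (QuotientGroup.mk (k * t) : G ⧸ P) = QuotientGroup.mk h := by
        rw [← hkt]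
        rfl
      rw [QuotientGroup.eq] at this
      refine ⟨k, hk, (k * t)⁻¹ * h, this, by group⟩
    · rintro ⟨k, hk, l, hl, rfl⟩
      refine ⟨⟨k, hk⟩, ?_⟩
      show (QuotientGroup.mk (k * t) : G ⧸ P) = QuotientGroup.mk (k * t * l)
      rw [QuotientGroup.eq]
      have he : (k * t)⁻¹ * (k * t * l) = l := by group
      rw [he]; exact hl
  have hinj : Function.Injective rep := by
    intro ω ω' h
    have h2 := congrArg (fun g : G => (QuotientGroup.mk g : G ⧸ P)) h
    simp only [hrep] at h2
    exact Quotient.out_injective h2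
  let cls : G ⧸ P → Ω := Quotient.mk''
  have hcls_out : ∀ ω : Ω, cls (Quotient.out ω) = ω := fun ω => Quotient.out_eq' ω
  have hmem_iff : ∀ x y : G ⧸ P, cls x = cls y ↔ x ∈ orbit P y := by
    intro x y
    rw [Quotient.eq'']
    exact orbitRel_apply
  refine ⟨Finset.image rep Finset.univ, fun h => ?_, ?_⟩
  · refine ⟨rep (cls (QuotientGroup.mk h)), ⟨Finset.mem_image_of_mem rep (Finset.mem_univ _), ?_⟩, ?_⟩
    · rw [← horb, ← hmem_iff]
      rw [hrep, hcls_out]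
    · rintro t ⟨htT, hdc⟩
      obtain ⟨ω, -, rfl⟩ := Finset.mem_image.mp htT
      have : cls (QuotientGroup.mk h) = ω := by
        have := (hmem_iff _ _).mpr ((horb h (rep ω)).mpr hdc)
        rwa [hrep, hcls_out] at this
      rw [this]
  · rw [Finset.sum_image (fun x _ y _ h => hinj h)]
    have hstab : ∀ t : G, stabilizer P (QuotientGroup.mk t : G ⧸ P)
        = ((P ⊓ MulAut.conj t • P).subgroupOf P) := by
      intro t
      ext ⟨x, hx⟩
      simp only [mem_stabilizer_iff, Subgroup.mem_subgroupOf, Subgroup.mem_inf,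
        Subgroup.mem_pointwise_smul_iff_inv_smul_mem]
      constructor
      · intro hxt
        refine ⟨hx, ?_⟩
        have : (QuotientGroup.mk (x * t) : G ⧸ P) = QuotientGroup.mk t := by
          rw [← hxt]; rfl
        rw [QuotientGroup.eq] at this
        simp only [MulAut.smul_def, MulAut.conj_inv_apply]
        have : (t⁻¹ * x * t)⁻¹ ∈ P := by
          convert this using 1
          group
        simpa using (P.inv_mem this)
      · rintro ⟨-, hc⟩
        show ((x : G) • (QuotientGroup.mk t : G ⧸ P)) = QuotientGroup.mk t
        have : (QuotientGroup.mk (x * t) : G ⧸ P) = QuotientGroup.mk t := by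
          rw [QuotientGroup.eq]
          simp only [MulAut.smul_def, MulAut.conj_inv_apply] at hc
          convert P.inv_mem hc using 1
          group
        calc ((x : G) • (QuotientGroup.mk t : G ⧸ P)) = QuotientGroup.mk (x * t) := rfl
          _ = QuotientGroup.mk t := this
    have hcard : ∀ ω : Ω, (P ⊓ MulAut.conj (rep ω) • P).relIndex P
        = Nat.card (↥P ⧸ stabilizer P (Quotient.out ω)) := by
      intro ω
      rw [← hrep ω, hstab]
      rfl
    calc ∑ ω : Ω, (P ⊓ MulAut.conj (rep ω) • P).relIndex P
        = ∑ ω : Ω, Nat.card (↥P ⧸ stabilizer P (Quotient.out ω)) :=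
          Finset.sum_congr rfl (fun ω _ => hcard ω)
      _ = Nat.card (Σ ω : Ω, ↥P ⧸ stabilizer P (Quotient.out ω)) := by
          letI : ∀ ω : Ω, Fintype (↥P ⧸ stabilizer P (Quotient.out ω)) :=
            fun _ => Fintype.ofFinite _
          simp [Nat.card_eq_fintype_card, Fintype.card_sigma]
      _ = Nat.card (G ⧸ P) :=
          Nat.card_congr (selfEquivSigmaOrbitsQuotientStabilizer P (G ⧸ P)).symm
      _ = P.index := rfl

section MackeyHelpers
variable {G : Type*} [Group G] {obj : Subgroup G → Type*} [∀ H, AddCommGroup (obj H)]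

lemma MackeyFunctor.tr_conj_res_top_aux (M : MackeyFunctor G obj) (g : G) (A B : Subgroup G)
    (eA : A = ⊤) (eB : B = ⊤) (h1 : A ≤ ⊤) (h2 : MulAut.conj g • B = A) (h3 : B ≤ ⊤)
    (h4 : MulAut.conj g • (⊤ : Subgroup G) = ⊤) (x : obj ⊤) :
    M.tr A ⊤ h1 (M.conj g B A h2 (M.res B ⊤ h3 x)) = M.conj g ⊤ ⊤ h4 x := by
  subst eA eB
  rw [M.tr_refl, M.res_refl]
  rfl

lemma MackeyFunctor.conj_top_eq (M : MackeyFunctor G obj) (g : G)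
    (h : MulAut.conj g • (⊤ : Subgroup G) = ⊤) (x : obj ⊤) :
    M.conj g ⊤ ⊤ h x = x := by
  have huniq : ∀ hh ∈ (⊤ : Subgroup G), ∃! t, t ∈ ({g} : Finset G) ∧
      ∃ k ∈ (⊤ : Subgroup G), ∃ l ∈ (⊤ : Subgroup G), hh = k * t * l := by
    intro hh _
    refine ⟨g, ⟨Finset.mem_singleton_self g, hh * g⁻¹, trivial, 1, trivial, by group⟩, ?_⟩
    rintro t ⟨ht, -⟩
    exact Finset.mem_singleton.mp ht
  have key := M.mackey ⊤ ⊤ ⊤ le_rfl le_rfl {g} (by simp) huniq x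
  rw [M.res_refl, M.tr_refl] at key
  rw [Finset.sum_attach ({g} : Finset G) (fun t : G =>
    M.tr (⊤ ⊓ MulAut.conj t • ⊤) ⊤ inf_le_left
      (M.conj t ((MulAut.conj t)⁻¹ • ⊤ ⊓ ⊤) (⊤ ⊓ MulAut.conj t • ⊤)
        (conj_smul_inf_aux _ ⊤ ⊤)
        (M.res ((MulAut.conj t)⁻¹ • ⊤ ⊓ ⊤) ⊤ inf_le_right x))),
    Finset.sum_singleton] at key
  rw [M.tr_conj_res_top_aux g _ _ (by simp [aux_smul_top]) (by simp [aux_smul_top])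
    _ _ _ h x] at key
  exact key.symm

lemma MackeyFunctor.conj_res_congr (M : MackeyFunctor G obj) (g : G) (Pb A B B' : Subgroup G)
    (eB : B = B') (hB : B ≤ Pb) (hB' : B' ≤ Pb) (h : MulAut.conj g • B = A)
    (h' : MulAut.conj g • B' = A) (x : obj Pb) :
    M.conj g B A h (M.res B Pb hB x) = M.conj g B' A h' (M.res B' Pb hB' x) := by
  subst eB; rfl

end MackeyHelpers

/-- Let `M` be a cohomological Mackey functor for a finite group `G` whose
values are `ℤ[1/m]`-modules, `m` the product of the primes dividing `|G|` other than `p`, and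
let `P` be a Sylow `p`-subgroup.  Let `R ⊆ M(G/P)` be the set of *stable elements*, i.e. those
`x` with `res^P_H x = c_g (res^P_{g⁻¹Hg} x)` for all `H ≤ P` and `g ∈ G` with `g⁻¹Hg ≤ P`.
Then the composite `R ↪ M(G/P) → M(G/G)` given by the transfer `tr^G_P` is an isomorphism
(a bijection; it is evidently additive). -/
theorem stmt14 (G : Type*) [Group G] [Finite G] (p : ℕ) [Fact p.Prime]
    (obj : Subgroup G → Type*) [∀ H, AddCommGroup (obj H)]
    (M : MackeyFunctor G obj) (hcoh : M.IsCohomological)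
    (hinv : ∀ q : ℕ, q.Prime → q ∣ Nat.card G → q ≠ p →
      ∀ H : Subgroup G, Function.Bijective (fun x : obj H => q • x))
    (P : Sylow p G) :
    Function.Bijective
      (fun x : {x : obj (P : Subgroup G) //
          ∀ (H : Subgroup G) (hH : H ≤ (P : Subgroup G)) (g : G)
            (hg : MulAut.conj g⁻¹ • H ≤ (P : Subgroup G)),
            M.res H (P : Subgroup G) hH x =
              M.conj g (MulAut.conj g⁻¹ • H) H
                (by rw [map_inv, smul_inv_smul])
                (M.res (MulAut.conj g⁻¹ • H) (P : Subgroup G) hg x)} =>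
        M.tr (P : Subgroup G) ⊤ le_top x.1) := by
  classical
  set P' := (P : Subgroup G) with hP'
  set n := P'.index with hn
  have hn0 : n ≠ 0 := Subgroup.index_ne_zero_of_finite
  have hnbij : ∀ H : Subgroup G, Function.Bijective (fun x : obj H => n • x) := by
    intro H
    refine aux_nsmul_bij n hn0 (fun q hq hd => hinv q hq (hd.trans P'.index_dvd_card) ?_ H)
    rintro rfl
    exact P.not_dvd_index hd
  have hcoh_top : ∀ y : obj ⊤, M.tr P' ⊤ le_top (M.res P' ⊤ le_top y) = n • y := by
    intro y
    rw [hcoh P' ⊤ le_top y, Subgroup.relIndex_top_right]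
  -- resolutions of elements of obj ⊤ are stable
  have hstab : ∀ (y : obj ⊤) (H : Subgroup G) (hH : H ≤ P') (g : G)
      (hg : MulAut.conj g⁻¹ • H ≤ P'),
      M.res H P' hH (M.res P' ⊤ le_top y) =
        M.conj g (MulAut.conj g⁻¹ • H) H (by rw [map_inv, smul_inv_smul])
          (M.res (MulAut.conj g⁻¹ • H) P' hg (M.res P' ⊤ le_top y)) := by
    intro y H hH g hg
    have e1 : M.res H P' hH (M.res P' ⊤ le_top y) = M.res H ⊤ le_top y := by
      rw [← AddMonoidHom.comp_apply, M.res_trans]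
    have e2 : M.res (MulAut.conj g⁻¹ • H) P' hg (M.res P' ⊤ le_top y)
        = M.res (MulAut.conj g⁻¹ • H) ⊤ le_top y := by
      rw [← AddMonoidHom.comp_apply, M.res_trans]
    rw [e1, e2]
    have hc := M.conj_res g (MulAut.conj g⁻¹ • H) ⊤ H ⊤ le_top
      (by rw [map_inv, smul_inv_smul]) (aux_smul_top _) le_top
    have hc2 : M.res H ⊤ le_top (M.conj g ⊤ ⊤ (aux_smul_top _) y)
        = M.conj g (MulAut.conj g⁻¹ • H) H (by rw [map_inv, smul_inv_smul])
          (M.res (MulAut.conj g⁻¹ • H) ⊤ le_top y) := DFunLike.congr_fun hc y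
    rw [M.conj_top_eq] at hc2
    exact hc2
  -- the key computation : res ∘ tr is multiplication by n on stable elements
  have hres_tr : ∀ (x : obj P'),
      (∀ (H : Subgroup G) (hH : H ≤ P') (g : G) (hg : MulAut.conj g⁻¹ • H ≤ P'),
        M.res H P' hH x = M.conj g (MulAut.conj g⁻¹ • H) H (by rw [map_inv, smul_inv_smul])
          (M.res (MulAut.conj g⁻¹ • H) P' hg x)) →
      M.res P' ⊤ le_top (M.tr P' ⊤ le_top x) = n • x := by
    intro x hx
    obtain ⟨T, hT, hsum⟩ := aux_count P'
    have hmack := M.mackey ⊤ P' P' le_top le_top T (by simp) (fun h _ => hT h) x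
    rw [hmack]
    have hterm : ∀ t : G,
        M.tr (P' ⊓ MulAut.conj t • P') P' inf_le_left
          (M.conj t ((MulAut.conj t)⁻¹ • P' ⊓ P') (P' ⊓ MulAut.conj t • P')
            (conj_smul_inf_aux _ P' P')
            (M.res ((MulAut.conj t)⁻¹ • P' ⊓ P') P' inf_le_right x))
        = ((P' ⊓ MulAut.conj t • P').relIndex P') • x := by
      intro t
      have eB : MulAut.conj t⁻¹ • (P' ⊓ MulAut.conj t • P') = (MulAut.conj t)⁻¹ • P' ⊓ P' := by
        rw [map_inv, ← conj_smul_inf_aux (MulAut.conj t) P' P', inv_smul_smul]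
      have hg' : MulAut.conj t⁻¹ • (P' ⊓ MulAut.conj t • P') ≤ P' := by
        rw [eB]; exact inf_le_right
      have hx' := hx (P' ⊓ MulAut.conj t • P') inf_le_left t hg'
      rw [M.conj_res_congr t P' (P' ⊓ MulAut.conj t • P')
        (MulAut.conj t⁻¹ • (P' ⊓ MulAut.conj t • P')) ((MulAut.conj t)⁻¹ • P' ⊓ P') eB hg'
        inf_le_right _ (conj_smul_inf_aux _ P' P') x] at hx'
      rw [← hx']
      exact hcoh _ _ _ x
    calc ∑ t ∈ T.attach,
          M.tr (P' ⊓ MulAut.conj (t : G) • P') P' inf_le_left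
            (M.conj (t : G) ((MulAut.conj (t : G))⁻¹ • P' ⊓ P') (P' ⊓ MulAut.conj (t : G) • P')
              (conj_smul_inf_aux _ P' P')
              (M.res ((MulAut.conj (t : G))⁻¹ • P' ⊓ P') P' inf_le_right x))
        = ∑ t ∈ T.attach, ((P' ⊓ MulAut.conj (t : G) • P').relIndex P') • x :=
          Finset.sum_congr rfl (fun t _ => hterm t)
      _ = ∑ t ∈ T, ((P' ⊓ MulAut.conj t • P').relIndex P') • x :=
          Finset.sum_attach T (fun t : G => ((P' ⊓ MulAut.conj t • P').relIndex P') • x)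
      _ = (∑ t ∈ T, (P' ⊓ MulAut.conj t • P').relIndex P') • x := by
          rw [Finset.sum_smul]
      _ = n • x := by rw [hsum]
  constructor
  · rintro ⟨x, hx⟩ ⟨x', hx'⟩ h
    simp only at h
    apply Subtype.ext
    have h2 : n • x = n • x' := by
      rw [← hres_tr x hx, ← hres_tr x' hx', h]
    exact (hnbij P').1 h2
  · intro z
    obtain ⟨w, hw⟩ := (hnbij ⊤).2 z
    refine ⟨⟨M.res P' ⊤ le_top w, fun H hH g hg => hstab w H hH g hg⟩, ?_⟩
    simp only
    rw [hcoh_top w]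
    exact hw
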